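/- Let C be a quantum channel from ℂ^d to ℂ^d and let δ ≥ 0. Suppose that ‖ |w⟩⟨w| − C(|w⟩⟨w|) ‖₁ ≤ δ for every unit vector w ∈ ℂ^d. Then for every pair of orthonormal vectors φ, φ' ∈ ℂ^d, the ℓ²→ℓ² operator norm satisfies ‖ |φ⟩⟨φ'| − C(|φ⟩⟨φ'|) ‖ ≤ δ; in particular, |⟨φ| ( |φ⟩⟨φ'| − C(|φ⟩⟨φ'|) ) |φ'⟩| ≤ δ. -/

import Mathlib

open Matrix BigOperators Kronecker ComplexOrder

noncomputable section

def IsDensityMatrix {n : Type*} [Fintype n] (ρ : Matrix n n ℂ) : Prop :=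
  ρ.PosSemidef ∧ ρ.trace = 1

def IsQuantumChannel {nA nB : Type*} [Fintype nA] [Fintype nB] [DecidableEq nA]
    (N : Matrix nA nA ℂ → Matrix nB nB ℂ) : Prop :=
  ∃ (k : ℕ) (K : Fin k → Matrix nB nA ℂ),
    (∀ X, N X = ∑ l, K l * X * (K l)ᴴ) ∧ (∑ l, (K l)ᴴ * K l) = 1

def ptraceSnd {n m : Type*} [Fintype m] (X : Matrix (n × m) (n × m) ℂ) : Matrix n n ℂ :=
  Matrix.of fun a a' => ∑ b, X (a, b) (a', b)

def ptraceFst {n m : Type*} [Fintype n] (X : Matrix (n × m) (n × m) ℂ) : Matrix m m ℂ :=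
  Matrix.of fun b b' => ∑ a, X (a, b) (a, b')

def vonNeumannEntropy {n : Type*} [Fintype n] [DecidableEq n] (ρ : Matrix n n ℂ) : ℝ :=
  if h : ρ.IsHermitian then ∑ i, Real.negMulLog (h.eigenvalues i) else 0

def traceNorm {m n : Type*} [Fintype m] [Fintype n] [DecidableEq n] (A : Matrix m n ℂ) : ℝ :=
  (((Matrix.posSemidef_conjTranspose_mul_self A).1.eigenvectorUnitary : Matrix n n ℂ) *
    diagonal (((↑) : ℝ → ℂ) ∘ Real.sqrt ∘ (Matrix.posSemidef_conjTranspose_mul_self A).1.eigenvalues) *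
    (star (Matrix.posSemidef_conjTranspose_mul_self A).1.eigenvectorUnitary : Matrix n n ℂ)).trace.re

def tensorIdChannel {nA nB : Type*} (d : Type*)
    (C : Matrix nA nA ℂ → Matrix nB nB ℂ)
    (X : Matrix (d × nA) (d × nA) ℂ) : Matrix (d × nB) (d × nB) ℂ :=
  Matrix.of fun p q => C (Matrix.of fun a a' => X (p.1, a) (q.1, a')) p.2 q.2

def maxEntangled (M : ℕ) : Matrix (Fin M × Fin M) (Fin M × Fin M) ℂ :=
  Matrix.of fun p q => if p.1 = p.2 ∧ q.1 = q.2 then (M : ℂ)⁻¹ else 0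

def maxEntVec (M : ℕ) : Fin M × Fin M → ℂ :=
  fun p => if p.1 = p.2 then ((Real.sqrt M : ℝ) : ℂ)⁻¹ else 0

def fidVec {n : Type*} [Fintype n] (ψ : n → ℂ) (ρ : Matrix n n ℂ) : ℝ :=
  (star ψ ⬝ᵥ ρ.mulVec ψ).re

def thermal {n : Type*} [Fintype n] [DecidableEq n] (β : ℝ) (G : Matrix n n ℂ) : Matrix n n ℂ :=
  ((NormedSpace.exp ((-β : ℂ) • G)).trace)⁻¹ • NormedSpace.exp ((-β : ℂ) • G)

def l2OpNorm {m n : ℕ} (A : Matrix (Fin m) (Fin n) ℂ) : ℝ :=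
  ‖(Matrix.toEuclideanLin A).toContinuousLinearMap‖

end


open scoped Matrix.Norms.L2Operator

section Aux

/-- trace norm of a Hermitian matrix is the sum of the absolute values of its eigenvalues -/
theorem aux_traceNorm_hermitian {d : ℕ} (H : Matrix (Fin d) (Fin d) ℂ) (hH : H.IsHermitian) :
    traceNorm H = ∑ i, |hH.eigenvalues i| := by
  set U : Matrix (Fin d) (Fin d) ℂ := (hH.eigenvectorUnitary : Matrix (Fin d) (Fin d) ℂ) with hUdef
  set lam := hH.eigenvalues with hlam
  have hUU : Uᴴ * U = 1 := by
    rw [← Matrix.star_eq_conjTranspose]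
    exact (Matrix.mem_unitaryGroup_iff').mp hH.eigenvectorUnitary.2
  have key : ∀ v w : Fin d → ℂ, (U * diagonal v * Uᴴ) * (U * diagonal w * Uᴴ)
      = U * diagonal (fun i => v i * w i) * Uᴴ := by
    intro v w
    calc (U * diagonal v * Uᴴ) * (U * diagonal w * Uᴴ)
        = U * (diagonal v * ((Uᴴ * U) * (diagonal w * Uᴴ))) := by simp only [mul_assoc]
      _ = U * (diagonal v * (diagonal w * Uᴴ)) := by rw [hUU, one_mul]
      _ = U * diagonal (fun i => v i * w i) * Uᴴ := by
          simp only [← mul_assoc, diagonal_mul_diagonal]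
  have hspec' : H = U * diagonal (fun i => (lam i : ℂ)) * Uᴴ := hH.spectral_theorem
  set B : Matrix (Fin d) (Fin d) ℂ := U * Matrix.diagonal (fun i => (Complex.ofReal |lam i|)) * Uᴴ
    with hBdef
  have hBpsd : B.PosSemidef := by
    refine (Matrix.posSemidef_diagonal_iff.mpr fun i => ?_).mul_mul_conjTranspose_same U
    rw [Complex.le_def]
    simp [abs_nonneg]
  have hBsq : B ^ 2 = Hᴴ * H := by
    rw [hH.eq, pow_two, hBdef, key]
    conv_rhs => rw [hspec']
    rw [key]
    congr 2
    funext i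
    simp only [← Complex.ofReal_mul, abs_mul_abs_self]
  set hA := Matrix.posSemidef_conjTranspose_mul_self H with hAdef
  set V : Matrix (Fin d) (Fin d) ℂ := (hA.1.eigenvectorUnitary : Matrix (Fin d) (Fin d) ℂ)
    with hVdef
  set mu := hA.1.eigenvalues with hmu
  have hVV : Vᴴ * V = 1 := by
    rw [← Matrix.star_eq_conjTranspose]
    exact (Matrix.mem_unitaryGroup_iff').mp hA.1.eigenvectorUnitary.2
  have keyV : ∀ v w : Fin d → ℂ, (V * diagonal v * Vᴴ) * (V * diagonal w * Vᴴ)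
      = V * diagonal (fun i => v i * w i) * Vᴴ := by
    intro v w
    calc (V * diagonal v * Vᴴ) * (V * diagonal w * Vᴴ)
        = V * (diagonal v * ((Vᴴ * V) * (diagonal w * Vᴴ))) := by simp only [mul_assoc]
      _ = V * (diagonal v * (diagonal w * Vᴴ)) := by rw [hVV, one_mul]
      _ = V * diagonal (fun i => v i * w i) * Vᴴ := by
          simp only [← mul_assoc, diagonal_mul_diagonal]
  set B' : Matrix (Fin d) (Fin d) ℂ := V * diagonal (((↑) : ℝ → ℂ) ∘ Real.sqrt ∘ mu) * Vᴴ
    with hB'def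
  have hB'psd : B'.PosSemidef := by
    refine (Matrix.posSemidef_diagonal_iff.mpr fun i => ?_).mul_mul_conjTranspose_same V
    rw [Complex.le_def]
    simp [Real.sqrt_nonneg]
  have hfun : (fun i => (Complex.ofReal ∘ Real.sqrt ∘ mu) i * (Complex.ofReal ∘ Real.sqrt ∘ mu) i)
      = RCLike.ofReal ∘ hA.1.eigenvalues := by
    funext i
    show ((Real.sqrt (mu i) : ℂ) * (Real.sqrt (mu i) : ℂ)) = ((mu i : ℝ) : ℂ)
    rw [← Complex.ofReal_mul, Real.mul_self_sqrt (hA.eigenvalues_nonneg i)]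
  have hB'sq : B' ^ 2 = Hᴴ * H := by
    rw [pow_two, hB'def, keyV, hfun]
    exact hA.1.spectral_theorem.symm
  have hBeq : B = B' := by
    open scoped MatrixOrder in
    exact (CFC.sq_eq_sq_iff B B' hBpsd.nonneg hB'psd.nonneg).mp (hBsq.trans hB'sq.symm)
  have hTN : traceNorm H = B'.trace.re := rfl
  rw [hTN, ← hBeq, hBdef, Matrix.trace_mul_cycle, hUU, one_mul, Matrix.trace_diagonal]
  simp

theorem aux_diag_opNorm_le {d : ℕ} (v : Fin d → ℂ) (c : ℝ) (hc : 0 ≤ c) (h : ∀ i, ‖v i‖ ≤ c) :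
    ‖Matrix.diagonal v‖ ≤ c := by
  rw [l2_opNorm_def]
  apply ContinuousLinearMap.opNorm_le_bound _ hc
  intro x
  rw [LinearEquiv.trans_apply, LinearMap.coe_toContinuousLinearMap', toEuclideanLin_apply,
    EuclideanSpace.norm_eq]
  have hx : ‖x‖ = Real.sqrt (∑ i, ‖x i‖^2) := by rw [EuclideanSpace.norm_eq]
  rw [hx, ← Real.sqrt_sq hc, ← Real.sqrt_mul (by positivity)]
  apply Real.sqrt_le_sqrt
  rw [Finset.mul_sum]
  apply Finset.sum_le_sum
  intro i _
  simp only [PiLp.toLp_apply, WithLp.equiv_symm_apply, mulVec_diagonal]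
  rw [norm_mul, mul_pow]
  exact mul_le_mul_of_nonneg_right (pow_le_pow_left₀ (norm_nonneg _) (h i) 2) (by positivity)

theorem aux_unitary_opNorm_le {d : ℕ} (U : Matrix (Fin d) (Fin d) ℂ)
    (hU : U ∈ Matrix.unitaryGroup (Fin d) ℂ) : ‖U‖ ≤ 1 := by
  have h1 : ‖(1 : Matrix (Fin d) (Fin d) ℂ)‖ ≤ 1 := by
    have := map_one (Matrix.toEuclideanCLM (n := Fin d) (𝕜 := ℂ))
    rw [Matrix.cstar_norm_def, this]
    exact ContinuousLinearMap.norm_id_le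
  have h2 : ‖U‖ * ‖U‖ ≤ 1 := by
    rw [← Matrix.l2_opNorm_conjTranspose_mul_self, ← Matrix.star_eq_conjTranspose,
      (Matrix.mem_unitaryGroup_iff').mp hU]
    exact h1
  nlinarith [norm_nonneg U]

theorem aux_traceless_hermitian_opNorm_le {d : ℕ} (H : Matrix (Fin d) (Fin d) ℂ)
    (hH : H.IsHermitian) (htr : H.trace = 0) : ‖H‖ ≤ traceNorm H / 2 := by
  set U : Matrix (Fin d) (Fin d) ℂ := (hH.eigenvectorUnitary : Matrix (Fin d) (Fin d) ℂ) with hUdef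
  set lam := hH.eigenvalues with hlam
  have hUU : Uᴴ * U = 1 := by
    rw [← Matrix.star_eq_conjTranspose]
    exact (Matrix.mem_unitaryGroup_iff').mp hH.eigenvectorUnitary.2
  have hspec' : H = U * diagonal (fun i => (lam i : ℂ)) * Uᴴ := hH.spectral_theorem
  have hsum : ∑ i, lam i = 0 := by
    have h0 : H.trace = ∑ i, (lam i : ℂ) := by
      conv_lhs => rw [hspec']
      rw [Matrix.trace_mul_cycle, hUU, one_mul, Matrix.trace_diagonal]
    rw [htr] at h0
    have := congrArg Complex.re h0.symm
    simpa using this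
  set S := ∑ i, |lam i| with hS
  have hS0 : 0 ≤ S := Finset.sum_nonneg fun i _ => abs_nonneg _
  have hmax : ∀ j, |lam j| ≤ S / 2 := by
    intro j
    have h1 : lam j = -∑ i ∈ Finset.univ.erase j, lam i := by
      have := Finset.add_sum_erase Finset.univ lam (Finset.mem_univ j)
      rw [hsum] at this
      linarith
    have h2 : |lam j| ≤ ∑ i ∈ Finset.univ.erase j, |lam i| := by
      rw [h1, abs_neg]
      exact Finset.abs_sum_le_sum_abs _ _
    have h3 : ∑ i ∈ Finset.univ.erase j, |lam i| = S - |lam j| := by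
      rw [hS, ← Finset.add_sum_erase Finset.univ (fun i => |lam i|) (Finset.mem_univ j)]
      ring
    linarith
  have hTN : traceNorm H = S := aux_traceNorm_hermitian H hH
  rw [hTN]
  calc ‖H‖ = ‖U * diagonal (fun i => (lam i : ℂ)) * Uᴴ‖ := by rw [← hspec']
    _ ≤ ‖U * diagonal (fun i => (lam i : ℂ))‖ * ‖Uᴴ‖ := Matrix.l2_opNorm_mul _ _
    _ ≤ (‖U‖ * ‖diagonal (fun i => (lam i : ℂ))‖) * ‖Uᴴ‖ :=
        mul_le_mul_of_nonneg_right (Matrix.l2_opNorm_mul _ _) (norm_nonneg _)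
    _ ≤ (1 * (S / 2)) * 1 := by
        have hU1 : ‖U‖ ≤ 1 := aux_unitary_opNorm_le U hH.eigenvectorUnitary.2
        have hUH : ‖Uᴴ‖ ≤ 1 := by rw [Matrix.l2_opNorm_conjTranspose]; exact hU1
        have hD : ‖diagonal (fun i => (lam i : ℂ))‖ ≤ S / 2 :=
          aux_diag_opNorm_le _ _ (by linarith [hS0]) fun i => by
            rw [Complex.norm_real]; exact hmax i
        exact mul_le_mul (mul_le_mul hU1 hD (norm_nonneg _) zero_le_one) hUH (norm_nonneg _)
          (by positivity)
    _ = S / 2 := by ring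

theorem aux_decomp {d : ℕ} (φ φ' : Fin d → ℂ) :
    vecMulVec φ (star φ') = ∑ k : Fin 4, ((1/2 : ℂ) * Complex.I ^ (k : ℕ)) •
      vecMulVec (((Real.sqrt 2)⁻¹ : ℝ) • (φ + Complex.I ^ (k : ℕ) • φ'))
        (star (((Real.sqrt 2)⁻¹ : ℝ) • (φ + Complex.I ^ (k : ℕ) • φ'))) := by
  have hs : ((((Real.sqrt 2)⁻¹ : ℝ)) : ℂ) * ((((Real.sqrt 2)⁻¹ : ℝ)) : ℂ) = 1/2 := by
    norm_cast
    rw [← mul_inv, Real.mul_self_sqrt (by norm_num)]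
    norm_num
  have i0 : Complex.I ^ ((0 : Fin 4) : ℕ) = 1 := by norm_num
  have i1 : Complex.I ^ ((1 : Fin 4) : ℕ) = Complex.I := by norm_num
  have i2 : Complex.I ^ ((2 : Fin 4) : ℕ) = -1 := by
    rw [show ((2 : Fin 4) : ℕ) = 2 from rfl, Complex.I_sq]
  have i3 : Complex.I ^ ((3 : Fin 4) : ℕ) = -Complex.I := by
    rw [show ((3 : Fin 4) : ℕ) = 3 from rfl, pow_succ, Complex.I_sq]
    ring
  ext a b
  simp only [vecMulVec_apply, Matrix.sum_apply, Matrix.smul_apply, Pi.smul_apply, Pi.add_apply,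
    Pi.star_apply, smul_eq_mul, Complex.real_smul, star_mul', star_add, Complex.star_def,
    Fin.sum_univ_four, i0, i1, i2, i3, map_add, _root_.map_mul, _root_.map_one, map_neg,
    map_inv₀, Complex.I_sq, Complex.conj_ofReal, Complex.conj_I, one_mul, neg_mul, mul_neg,
    neg_neg]
  ring_nf
  linear_combination (-2 * φ a * (starRingEnd ℂ) (φ' b)) * hs +
    ((φ a * (starRingEnd ℂ) (φ' b) - φ' a * (starRingEnd ℂ) (φ b)) *
      ((((Real.sqrt 2)⁻¹ : ℝ)) : ℂ) ^ 2) * Complex.I_sq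

theorem aux_unit {d : ℕ} (φ φ' : Fin d → ℂ) (hφ : star φ ⬝ᵥ φ = 1) (hφ' : star φ' ⬝ᵥ φ' = 1)
    (hortho : star φ ⬝ᵥ φ' = 0) (kk : ℕ) :
    star (((Real.sqrt 2)⁻¹ : ℝ) • (φ + Complex.I ^ kk • φ')) ⬝ᵥ
      (((Real.sqrt 2)⁻¹ : ℝ) • (φ + Complex.I ^ kk • φ')) = 1 := by
  have hs : ((((Real.sqrt 2)⁻¹ : ℝ)) : ℂ) * ((((Real.sqrt 2)⁻¹ : ℝ)) : ℂ) = 1/2 := by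
    norm_cast
    rw [← mul_inv, Real.mul_self_sqrt (by norm_num)]
    norm_num
  have horto' : star φ' ⬝ᵥ φ = 0 := by
    have h : star φ' ⬝ᵥ φ = star (star φ ⬝ᵥ φ') := by
      simp [dotProduct, mul_comm]
    rw [h, hortho, star_zero]
  have hc : (starRingEnd ℂ) (Complex.I ^ kk) * Complex.I ^ kk = 1 := by
    rw [mul_comm, Complex.mul_conj]
    simp [map_pow]
  simp only [star_smul, star_trivial, star_add, smul_dotProduct, dotProduct_smul,
    add_dotProduct, dotProduct_add, smul_eq_mul, Complex.real_smul,
    Complex.star_def, map_pow, Complex.conj_I]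
  rw [hφ, hφ', hortho, horto']
  have hc' : (-Complex.I) ^ kk * Complex.I ^ kk = 1 := by
    rw [← Complex.conj_I, ← map_pow] at *
    exact hc
  linear_combination (((((Real.sqrt 2)⁻¹ : ℝ)) : ℂ) * ((((Real.sqrt 2)⁻¹ : ℝ)) : ℂ)) * hc' +
    2 * hs

end Aux

/-- Off-diagonal operator-norm bound from trace-distance bounds on
pure states, for a quantum channel close to the identity. -/
theorem off_diagonal_bound_of_pure_state_trace_bound
    (d : ℕ)
    (C : Matrix (Fin d) (Fin d) ℂ → Matrix (Fin d) (Fin d) ℂ)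
    (hC : IsQuantumChannel C)
    (δ : ℝ) (hδ : 0 ≤ δ)
    (hw : ∀ w : Fin d → ℂ, star w ⬝ᵥ w = 1 →
      traceNorm (vecMulVec w (star w) - C (vecMulVec w (star w))) ≤ δ) :
    ∀ φ φ' : Fin d → ℂ, star φ ⬝ᵥ φ = 1 → star φ' ⬝ᵥ φ' = 1 → star φ ⬝ᵥ φ' = 0 →
      l2OpNorm (vecMulVec φ (star φ') - C (vecMulVec φ (star φ'))) ≤ δ ∧
      ‖(star φ ⬝ᵥ
        ((vecMulVec φ (star φ') - C (vecMulVec φ (star φ'))) *ᵥ φ'))‖ ≤ δ := by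
  intro φ φ' hφ hφ' hortho
  obtain ⟨nk, K, hK, hKK⟩ := hC
  -- channel preserves hermiticity and trace
  have hCherm : ∀ X : Matrix (Fin d) (Fin d) ℂ, X.IsHermitian → (C X).IsHermitian := by
    intro X hX
    show (C X)ᴴ = C X
    rw [hK, Matrix.conjTranspose_sum]
    refine Finset.sum_congr rfl fun l _ => ?_
    simp [conjTranspose_mul, hX.eq, mul_assoc]
  have hCtrace : ∀ X : Matrix (Fin d) (Fin d) ℂ, (C X).trace = X.trace := by
    intro X
    rw [hK, trace_sum]
    have h : ∀ l, (K l * X * (K l)ᴴ).trace = ((K l)ᴴ * K l * X).trace := fun l =>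
      Matrix.trace_mul_cycle (K l) X (K l)ᴴ
    simp_rw [h, ← trace_sum, ← Finset.sum_mul, hKK, one_mul]
  set w : Fin 4 → (Fin d → ℂ) :=
    fun k => ((Real.sqrt 2)⁻¹ : ℝ) • (φ + Complex.I ^ (k : ℕ) • φ') with hwdef
  have hwunit : ∀ k : Fin 4, star (w k) ⬝ᵥ (w k) = 1 := fun k =>
    aux_unit φ φ' hφ hφ' hortho (k : ℕ)
  set P : Fin 4 → Matrix (Fin d) (Fin d) ℂ := fun k => vecMulVec (w k) (star (w k)) with hPdef
  set c : Fin 4 → ℂ := fun k => (1/2 : ℂ) * Complex.I ^ (k : ℕ) with hcdef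
  have hdecomp : vecMulVec φ (star φ') = ∑ k, c k • P k := aux_decomp φ φ'
  have hCsum : C (∑ k, c k • P k) = ∑ k, c k • C (P k) := by
    calc C (∑ k, c k • P k) = ∑ l, K l * (∑ k, c k • P k) * (K l)ᴴ := hK _
      _ = ∑ l, ∑ k, c k • (K l * P k * (K l)ᴴ) := by
          refine Finset.sum_congr rfl fun l _ => ?_
          rw [Finset.mul_sum, Finset.sum_mul]
          refine Finset.sum_congr rfl fun k _ => ?_
          rw [Matrix.mul_smul, Matrix.smul_mul]
      _ = ∑ k, ∑ l, c k • (K l * P k * (K l)ᴴ) := Finset.sum_comm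
      _ = ∑ k, c k • C (P k) := by
          refine Finset.sum_congr rfl fun k _ => ?_
          rw [← Finset.smul_sum, ← hK]
  have hM : vecMulVec φ (star φ') - C (vecMulVec φ (star φ'))
      = ∑ k, c k • (P k - C (P k)) := by
    conv_lhs => rw [hdecomp, hCsum]
    rw [← Finset.sum_sub_distrib]
    exact Finset.sum_congr rfl fun k _ => (smul_sub _ _ _).symm
  -- each term is traceless hermitian with trace norm at most δ
  have hDk : ∀ k : Fin 4, ‖P k - C (P k)‖ ≤ δ / 2 := by
    intro k
    have hPh : (P k).IsHermitian := by
      show (P k)ᴴ = P k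
      ext i j
      simp [hPdef, vecMulVec_apply, conjTranspose_apply, mul_comm]
    have hPtr : (P k).trace = 1 := by
      have : (P k).trace = star (w k) ⬝ᵥ (w k) := by
        simp [hPdef, Matrix.trace, Matrix.diag, vecMulVec_apply, dotProduct, mul_comm]
      rw [this, hwunit k]
    have hHerm : (P k - C (P k)).IsHermitian := hPh.sub (hCherm _ hPh)
    have hTr : (P k - C (P k)).trace = 0 := by
      rw [Matrix.trace_sub, hCtrace, sub_self]
    have h1 : ‖P k - C (P k)‖ ≤ traceNorm (P k - C (P k)) / 2 :=
      aux_traceless_hermitian_opNorm_le _ hHerm hTr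
    have h2 : traceNorm (P k - C (P k)) ≤ δ := hw (w k) (hwunit k)
    linarith
  have hnorm : ‖vecMulVec φ (star φ') - C (vecMulVec φ (star φ'))‖ ≤ δ := by
    rw [hM]
    calc ‖∑ k, c k • (P k - C (P k))‖ ≤ ∑ k, ‖c k • (P k - C (P k))‖ := norm_sum_le _ _
      _ ≤ ∑ _k : Fin 4, (1/2 : ℝ) * (δ/2) := by
          refine Finset.sum_le_sum fun k _ => ?_
          rw [norm_smul]
          have hck : ‖c k‖ = 1/2 := by
            simp [hcdef, norm_mul, norm_pow]
          rw [hck]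
          exact mul_le_mul_of_nonneg_left (hDk k) (by norm_num)
      _ = δ := by
          rw [Finset.sum_const]
          simp
          ring
  have hOp : l2OpNorm (vecMulVec φ (star φ') - C (vecMulVec φ (star φ')))
      = ‖vecMulVec φ (star φ') - C (vecMulVec φ (star φ'))‖ := rfl
  refine ⟨by rw [hOp]; exact hnorm, ?_⟩
  -- Cauchy-Schwarz part
  set M := vecMulVec φ (star φ') - C (vecMulVec φ (star φ')) with hMdef
  set x : EuclideanSpace ℂ (Fin d) := (WithLp.equiv 2 _).symm φ with hxdef
  set x' : EuclideanSpace ℂ (Fin d) := (WithLp.equiv 2 _).symm φ' with hx'def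
  set y : EuclideanSpace ℂ (Fin d) := (WithLp.equiv 2 _).symm (M *ᵥ φ') with hydef
  have hip : (inner ℂ x y : ℂ) = star φ ⬝ᵥ (M *ᵥ φ') :=
    (EuclideanSpace.inner_toLp_toLp φ (M *ᵥ φ')).trans (dotProduct_comm _ _)
  have hxnorm : ‖x‖ = 1 := by
    have h1 : (inner ℂ x x : ℂ) = 1 := by
      exact (EuclideanSpace.inner_toLp_toLp φ φ).trans ((dotProduct_comm _ _).trans hφ)
    have h2 : (inner ℂ x x : ℂ) = (‖x‖ : ℂ)^2 := inner_self_eq_norm_sq_to_K x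
    rw [h2] at h1
    have h3 : ‖x‖^2 = 1 := by
      have := congrArg Complex.re h1
      simpa [← Complex.ofReal_pow] using this
    nlinarith [norm_nonneg x]
  have hx'norm : ‖x'‖ = 1 := by
    have h1 : (inner ℂ x' x' : ℂ) = 1 := by
      exact (EuclideanSpace.inner_toLp_toLp φ' φ').trans ((dotProduct_comm _ _).trans hφ')
    have h2 : (inner ℂ x' x' : ℂ) = (‖x'‖ : ℂ)^2 := inner_self_eq_norm_sq_to_K x'
    rw [h2] at h1
    have h3 : ‖x'‖^2 = 1 := by
      have := congrArg Complex.re h1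
      simpa [← Complex.ofReal_pow] using this
    nlinarith [norm_nonneg x']
  have hy : ‖y‖ ≤ ‖M‖ * ‖x'‖ := Matrix.l2_opNorm_mulVec M x'
  calc ‖(star φ ⬝ᵥ (M *ᵥ φ') : ℂ)‖ = ‖(inner ℂ x y : ℂ)‖ := by rw [hip]
    _ ≤ ‖x‖ * ‖y‖ := norm_inner_le_norm x y
    _ = ‖y‖ := by rw [hxnorm, one_mul]
    _ ≤ ‖M‖ * ‖x'‖ := hy
    _ = ‖M‖ := by rw [hx'norm, mul_one]
    _ ≤ δ := hnorm
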